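/- In the setting of the context, let b' : (−∞, 0] → [0, b∞] be another continuous nonincreasing function with b'(s) > 0 for all s < 0, and let t ≤ 0 satisfy b(t) ≠ b'(t). Then for every ε > 0 and all n, m ∈ ℕ, lim_{c→∞} D_{(−∞,t]}(n,m)(c) / D_{[t−ε,t]}(n,m)(c) = 1, where D_J(n,m)(c) := I^b_J(n,m)(c) − I^{b'}_J(n,m)(c). -/

import Mathlib

open MeasureTheory

/-- The quantity `I^b_J(n,m)(c)` from the paper. -/
noncomputable def Ib (r : ℝ) (htil : ℝ → ℝ) (b : ℝ → ℝ) (J : Set ℝ)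
    (n m : ℕ) (c : ℝ) : ℝ :=
  ∫ s in J, ∫ y in Set.Ioc (0 : ℝ) (b s),
    (1 - s) ^ n * y ^ m * Real.exp (c * y + c ^ 2 * s / 2 - r * s) * htil y

open Set Filter

section helpers

lemma expIic_int {μ : ℝ} (hμ : 1 ≤ μ) (T : ℝ) :
    IntegrableOn (fun s => Real.exp (μ * s)) (Set.Iic T) := by
  refine Integrable.mono' (g := fun s => Real.exp ((μ - 1) * T) * Real.exp s)
    ((integrableOn_exp_Iic T).const_mul _) ?_ ?_
  · exact (Real.continuous_exp.comp (continuous_const.mul continuous_id)).aestronglyMeasurable.restrict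
  · filter_upwards [ae_restrict_mem measurableSet_Iic] with s hs
    rw [Real.norm_eq_abs, abs_of_pos (Real.exp_pos _)]
    have h1 : Real.exp (μ * s) = Real.exp ((μ - 1) * s) * Real.exp s := by
      rw [← Real.exp_add]; congr 1; ring
    rw [h1]
    exact mul_le_mul_of_nonneg_right
      (Real.exp_le_exp.mpr (mul_le_mul_of_nonneg_left hs (by linarith))) (Real.exp_pos _).le

lemma expIic_val {μ : ℝ} (hμ : 1 ≤ μ) (T : ℝ) :
    ∫ s in Set.Iic T, Real.exp (μ * s) = Real.exp (μ * T) / μ := by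
  have h0 : (0:ℝ) < μ := by linarith
  have hderiv : ∀ x ∈ Set.Iic T, HasDerivAt (fun s => Real.exp (μ * s) / μ) (Real.exp (μ * x)) x := by
    intro x _
    have h1 : HasDerivAt (fun s : ℝ => Real.exp (μ * s)) (Real.exp (μ * x) * (μ * 1)) x :=
      ((hasDerivAt_id x).const_mul μ).exp
    have h2 := h1.div_const μ
    simpa [mul_one, mul_div_assoc, mul_div_cancel_right₀ _ (ne_of_gt h0)] using h2
  have htend : Filter.Tendsto (fun s : ℝ => Real.exp (μ * s) / μ) Filter.atBot (nhds 0) := by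
    have hμs : Filter.Tendsto (fun s : ℝ => μ * s) Filter.atBot Filter.atBot :=
      Filter.Tendsto.const_mul_atBot h0 tendsto_id
    have := (Real.tendsto_exp_atBot.comp hμs).div_const μ
    simpa using this
  have := integral_Iic_of_hasDerivAt_of_tendsto' hderiv (expIic_int hμ T) htend
  simpa using this

lemma poly_exp_le {n : ℕ} {lam T s : ℝ} (hs : s ≤ T) (hT : T ≤ 0) (hlam : 2 * (n:ℝ) ≤ lam) :
    (1 - s) ^ n * Real.exp (lam * s) ≤ (1 - T) ^ n * Real.exp (lam / 2 * T) * Real.exp (lam / 2 * s) := by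
  have h1T : (1:ℝ) ≤ 1 - T := by linarith
  have hTs : 0 ≤ T - s := by linarith
  have hn0 : (0:ℝ) ≤ (n:ℝ) := Nat.cast_nonneg n
  have h1 : (1 - s) ≤ (1 - T) * Real.exp (T - s) := by
    have h := Real.add_one_le_exp (T - s)
    nlinarith [Real.exp_pos (T - s)]
  have h2 : (1 - s) ^ n ≤ ((1 - T) * Real.exp (T - s)) ^ n :=
    pow_le_pow_left₀ (by linarith) h1 n
  have h3 : ((1 - T) * Real.exp (T - s)) ^ n = (1 - T) ^ n * Real.exp ((n:ℝ) * (T - s)) := by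
    rw [mul_pow, ← Real.exp_nat_mul]
  have h4 : Real.exp ((n:ℝ) * (T - s)) ≤ Real.exp (lam / 2 * (T - s)) := by
    apply Real.exp_le_exp.mpr; nlinarith
  have h5 : (1 - s) ^ n ≤ (1 - T) ^ n * Real.exp (lam / 2 * (T - s)) := by
    calc (1 - s) ^ n ≤ (1 - T) ^ n * Real.exp ((n:ℝ) * (T - s)) := by rw [← h3]; exact h2
    _ ≤ (1 - T) ^ n * Real.exp (lam / 2 * (T - s)) :=
        mul_le_mul_of_nonneg_left h4 (pow_nonneg (by linarith) n)
  calc (1 - s) ^ n * Real.exp (lam * s)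
      ≤ ((1 - T) ^ n * Real.exp (lam / 2 * (T - s))) * Real.exp (lam * s) :=
        mul_le_mul_of_nonneg_right h5 (Real.exp_pos _).le
  _ = (1 - T) ^ n * Real.exp (lam / 2 * T) * Real.exp (lam / 2 * s) := by
      rw [mul_assoc, ← Real.exp_add, mul_assoc, ← Real.exp_add]; congr 2; ring

lemma polyexp_int {n : ℕ} {lam T : ℝ} (hT : T ≤ 0) (hlam : 2 * (n:ℝ) + 2 ≤ lam) :
    IntegrableOn (fun s => (1 - s) ^ n * Real.exp (lam * s)) (Set.Iic T) := by
  have hn0 : (0:ℝ) ≤ (n:ℝ) := Nat.cast_nonneg n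
  have h2 : (1:ℝ) ≤ lam / 2 := by linarith
  refine Integrable.mono'
    ((expIic_int h2 T).const_mul ((1 - T) ^ n * Real.exp (lam / 2 * T))) ?_ ?_
  · refine ContinuousOn.aestronglyMeasurable ?_ measurableSet_Iic
    exact (((continuous_const.sub continuous_id).pow n).mul
      (Real.continuous_exp.comp (continuous_const.mul continuous_id))).continuousOn
  · filter_upwards [ae_restrict_mem measurableSet_Iic] with s hs
    rw [Real.norm_eq_abs, abs_of_nonneg (mul_nonneg (pow_nonneg (by simp at hs; linarith) n) (Real.exp_pos _).le)]
    have := poly_exp_le hs hT (by linarith)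
    calc (1 - s) ^ n * Real.exp (lam * s)
        ≤ (1 - T) ^ n * Real.exp (lam / 2 * T) * Real.exp (lam / 2 * s) := this
    _ = (1 - T) ^ n * Real.exp (lam / 2 * T) * Real.exp (lam / 2 * s) := rfl

lemma polyexp_intval {n : ℕ} {lam T : ℝ} (hT : T ≤ 0) (hlam : 2 * (n:ℝ) + 2 ≤ lam) :
    ∫ s in Set.Iic T, (1 - s) ^ n * Real.exp (lam * s)
      ≤ (1 - T) ^ n * Real.exp (lam * T) * (2 / lam) := by
  have hn0 : (0:ℝ) ≤ (n:ℝ) := Nat.cast_nonneg n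
  have h2 : (1:ℝ) ≤ lam / 2 := by linarith
  have hlam0 : (0:ℝ) < lam := by linarith
  have hmono : ∫ s in Set.Iic T, (1 - s) ^ n * Real.exp (lam * s)
      ≤ ∫ s in Set.Iic T, (1 - T) ^ n * Real.exp (lam / 2 * T) * Real.exp (lam / 2 * s) := by
    refine setIntegral_mono_on (polyexp_int hT hlam)
      ((expIic_int h2 T).const_mul _) measurableSet_Iic ?_
    intro s hs
    exact poly_exp_le hs hT (by linarith)
  calc ∫ s in Set.Iic T, (1 - s) ^ n * Real.exp (lam * s)
      ≤ ∫ s in Set.Iic T, (1 - T) ^ n * Real.exp (lam / 2 * T) * Real.exp (lam / 2 * s) := hmono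
  _ = (1 - T) ^ n * Real.exp (lam / 2 * T) * (Real.exp (lam / 2 * T) / (lam / 2)) := by
      rw [MeasureTheory.integral_const_mul, expIic_val h2 T]
  _ = (1 - T) ^ n * Real.exp (lam * T) * (2 / lam) := by
      rw [mul_assoc, mul_assoc]
      congr 1
      rw [← mul_div_assoc, ← Real.exp_add, show lam / 2 * T + lam / 2 * T = lam * T by ring]
      rw [div_eq_mul_inv, inv_div]

lemma quad_exp_tendsto (a b d : ℝ) (hb : 0 < b) :
    Filter.Tendsto (fun c : ℝ => Real.exp (a * c - (c ^ 2 / 2 - d) * b)) Filter.atTop (nhds 0) := by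
  apply Real.tendsto_exp_atBot.comp
  have hg : Filter.Tendsto (fun c : ℝ => a - c * (b / 2)) Filter.atTop Filter.atBot := by
    have h1 : Filter.Tendsto (fun c : ℝ => c * (b / 2)) Filter.atTop Filter.atTop :=
      Filter.Tendsto.atTop_mul_const (by linarith) tendsto_id
    simpa [sub_eq_add_neg] using tendsto_atBot_add_const_left _ a (tendsto_neg_atTop_atBot.comp h1)
  have h1 : Filter.Tendsto (fun c : ℝ => c * (a - c * (b / 2))) Filter.atTop Filter.atBot :=
    Filter.Tendsto.atTop_mul_atBot₀ tendsto_id hg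
  have heq : (fun c : ℝ => a * c - (c ^ 2 / 2 - d) * b) = fun c => c * (a - c * (b / 2)) + d * b := by
    funext c; ring
  rw [heq]
  exact tendsto_atBot_add_const_right _ _ h1

end helpers

set_option maxHeartbeats 1600000 in
lemma key (r bInfty : ℝ) (hb : 0 < bInfty)
    (htil : ℝ → ℝ) (hcont : ContinuousOn htil (Set.Icc 0 bInfty))
    (hnonneg : ∀ y ∈ Set.Icc 0 bInfty, 0 ≤ htil y)
    (hnull : volume {y | y ∈ Set.Icc (0 : ℝ) bInfty ∧ htil y = 0} = 0)
    (b : ℝ → ℝ) (hbcont : ContinuousOn b (Set.Iic 0))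
    (hbanti : AntitoneOn b (Set.Iic 0))
    (hbmem : ∀ s ≤ (0 : ℝ), b s ∈ Set.Icc 0 bInfty)
    (b' : ℝ → ℝ) (hbcont' : ContinuousOn b' (Set.Iic 0))
    (hbmem' : ∀ s ≤ (0 : ℝ), b' s ∈ Set.Icc 0 bInfty)
    (t : ℝ) (ht : t ≤ 0) (hlt : b' t < b t)
    (ε : ℝ) (hε : 0 < ε) (n m : ℕ) :
    Filter.Tendsto
      (fun c => (Ib r htil b (Set.Iic t) n m c - Ib r htil b' (Set.Iic t) n m c) /
        (Ib r htil b (Set.Icc (t - ε) t) n m c - Ib r htil b' (Set.Icc (t - ε) t) n m c))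
      Filter.atTop (nhds 1) := by
  have hb't0 : 0 ≤ b' t := (hbmem' t ht).1
  have hbtpos : 0 < b t := lt_of_le_of_lt hb't0 hlt
  have hbtle : b t ≤ bInfty := (hbmem t ht).2
  set β : ℝ := (b t + b' t) / 2 with hβdef
  have hβpos : 0 < β := by rw [hβdef]; linarith
  have hβlt : β < b t := by rw [hβdef]; linarith
  have hβgt : b' t < β := by rw [hβdef]; linarith
  have hβle : β ≤ bInfty := by linarith
  obtain ⟨δ₀, hδ₀pos, hδ₀⟩ :=
    Metric.continuousWithinAt_iff.mp (hbcont' t ht) ((b t - b' t) / 2) (by linarith)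
  set δ : ℝ := min (δ₀ / 2) ε with hδdef
  have hδpos : 0 < δ := lt_min (by linarith) hε
  have hδε : δ ≤ ε := min_le_right _ _
  have hb'β : ∀ s, t - δ ≤ s → s ≤ t → b' s < β := by
    intro s h1 h2
    have hs0 : s ≤ (0:ℝ) := le_trans h2 ht
    have hdist : dist s t < δ₀ := by
      rw [Real.dist_eq, abs_of_nonpos (by linarith)]
      have : δ ≤ δ₀ / 2 := min_le_left _ _
      linarith
    have h3 := hδ₀ (Set.mem_Iic.mpr hs0) hdist
    rw [Real.dist_eq] at h3
    have h4 := (abs_lt.mp h3).2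
    rw [hβdef]; linarith
  -- integrals of y^m * htil
  have hymcont : ContinuousOn (fun y : ℝ => y ^ m * htil y) (Set.Icc 0 bInfty) :=
    ((continuous_pow m).continuousOn).mul hcont
  have hHint : IntegrableOn (fun y : ℝ => y ^ m * htil y) (Set.Ioc 0 bInfty) :=
    (hymcont.integrableOn_Icc).mono_set Set.Ioc_subset_Icc_self
  have hymnn : ∀ y ∈ Set.Ioc (0:ℝ) bInfty, 0 ≤ y ^ m * htil y := fun y hy =>
    mul_nonneg (pow_nonneg hy.1.le m) (hnonneg y ⟨hy.1.le, hy.2⟩)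
  set M : ℝ := ∫ y in Set.Ioc (0:ℝ) bInfty, y ^ m * htil y with hMdef
  set A : ℝ := ∫ y in Set.Ioc β (b t), y ^ m * htil y with hAdef
  have hsubβ : Set.Ioc β (b t) ⊆ Set.Ioc 0 bInfty := Set.Ioc_subset_Ioc hβpos.le hbtle
  have hAint : IntegrableOn (fun y : ℝ => y ^ m * htil y) (Set.Ioc β (b t)) :=
    hHint.mono_set hsubβ
  have hM0 : 0 ≤ M := setIntegral_nonneg measurableSet_Ioc hymnn
  have hApos : 0 < A := by
    have hiff := setIntegral_pos_iff_support_of_nonneg_ae (μ := volume)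
      (s := Set.Ioc β (b t)) (f := fun y => y ^ m * htil y)
      ((ae_restrict_mem measurableSet_Ioc).mono (fun y hy => hymnn y (hsubβ hy))) hAint
    rw [hAdef, hiff]
    refine lt_of_lt_of_le ?_ (measure_mono (?_ :
      Set.Ioc β (b t) \ {y | y ∈ Set.Icc (0:ℝ) bInfty ∧ htil y = 0} ⊆
        Function.support (fun y => y ^ m * htil y) ∩ Set.Ioc β (b t)))
    · rw [measure_diff_null hnull, Real.volume_Ioc]
      exact ENNReal.ofReal_pos.mpr (by linarith)
    · rintro y ⟨hy, hyz⟩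
      have hy0 : 0 < y := lt_trans hβpos hy.1
      have hyI : y ∈ Set.Icc (0:ℝ) bInfty := ⟨hy0.le, hy.2.trans hbtle⟩
      have hne : htil y ≠ 0 := fun h => hyz ⟨hyI, h⟩
      have hpos : 0 < htil y := lt_of_le_of_ne (hnonneg y hyI) (Ne.symm hne)
      exact ⟨ne_of_gt (mul_pos (pow_pos hy0 m) hpos), hy⟩
  -- eventual conditions
  have hn0 : (0:ℝ) ≤ (n:ℝ) := Nat.cast_nonneg n
  have hlamT : Filter.Tendsto (fun c : ℝ => c ^ 2 / 2 - r) Filter.atTop Filter.atTop := by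
    have h1 : Filter.Tendsto (fun c : ℝ => c ^ 2) Filter.atTop Filter.atTop :=
      tendsto_pow_atTop (two_ne_zero)
    have h2 := (h1.atTop_div_const two_pos)
    simpa [sub_eq_add_neg] using tendsto_atTop_add_const_right Filter.atTop (-r) h2
  have ev1 : ∀ᶠ c : ℝ in Filter.atTop, (0:ℝ) ≤ c := Filter.eventually_ge_atTop 0
  have ev2 : ∀ᶠ c : ℝ in Filter.atTop, 2 * (n:ℝ) + 2 ≤ c ^ 2 / 2 - r :=
    hlamT.eventually_ge_atTop _
  set P : ℝ := A * (δ / 2) with hPdef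
  have hPpos : 0 < P := mul_pos hApos (by linarith)
  set Q : ℝ := M * (1 - (t - ε)) ^ n * ε with hQdef
  have hQ0 : 0 ≤ Q :=
    mul_nonneg (mul_nonneg hM0 (pow_nonneg (by linarith) n)) hε.le
  have ev3 : ∀ᶠ c : ℝ in Filter.atTop,
      Q * Real.exp ((bInfty - β) * c - (c ^ 2 / 2 - r) * (δ / 2)) < P / 2 := by
    have h0 := (quad_exp_tendsto (bInfty - β) (δ / 2) r (by linarith)).const_mul Q
    rw [mul_zero] at h0
    exact h0.eventually (gt_mem_nhds (by linarith))
  set R : ℝ → ℝ := fun c => (4 * (M * (1 - (t - ε)) ^ n) / P) *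
    Real.exp ((bInfty - β) * c - (c ^ 2 / 2 - r) * (ε - δ / 2)) with hRdef
  have hR0 : Filter.Tendsto R Filter.atTop (nhds 0) := by
    have h0 := (quad_exp_tendsto (bInfty - β) (ε - δ / 2) r (by linarith)).const_mul
      (4 * (M * (1 - (t - ε)) ^ n) / P)
    rw [mul_zero] at h0
    exact h0
  have main : ∀ᶠ c : ℝ in Filter.atTop,
      (Ib r htil b (Set.Iic t) n m c - Ib r htil b' (Set.Iic t) n m c) /
          (Ib r htil b (Set.Icc (t - ε) t) n m c - Ib r htil b' (Set.Icc (t - ε) t) n m c)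
        = (Ib r htil b (Set.Iic (t - ε)) n m c - Ib r htil b' (Set.Iic (t - ε)) n m c) /
          (Ib r htil b (Set.Icc (t - ε) t) n m c - Ib r htil b' (Set.Icc (t - ε) t) n m c) + 1
      ∧ |(Ib r htil b (Set.Iic (t - ε)) n m c - Ib r htil b' (Set.Iic (t - ε)) n m c) /
          (Ib r htil b (Set.Icc (t - ε) t) n m c - Ib r htil b' (Set.Icc (t - ε) t) n m c)|
          ≤ R c := by
    filter_upwards [ev1, ev2, ev3] with c hc0 hlam2 hev3
    set lam : ℝ := c ^ 2 / 2 - r with hlamdef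
    have hlam1 : (1:ℝ) ≤ lam := by linarith
    have hlam0 : (0:ℝ) < lam := by linarith
    -- G and its properties
    set G : ℝ → ℝ :=
      (Set.Ioc (0:ℝ) bInfty).indicator (fun y => y ^ m * Real.exp (c * y) * htil y) with hGdef
    have hGint : Integrable G := by
      rw [hGdef, integrable_indicator_iff measurableSet_Ioc]
      exact ((((continuous_pow m).mul
        (Real.continuous_exp.comp (continuous_const.mul continuous_id))).continuousOn).mul
        hcont).integrableOn_Icc.mono_set Set.Ioc_subset_Icc_self
    have hGnn : ∀ y, 0 ≤ G y := by
      intro y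
      rw [hGdef]
      apply Set.indicator_nonneg
      intro z hz
      exact mul_nonneg (mul_nonneg (pow_nonneg hz.1.le m) (Real.exp_pos _).le)
        (hnonneg z ⟨hz.1.le, hz.2⟩)
    set Hi : ℝ → ℝ := (Set.Ioc (0:ℝ) bInfty).indicator (fun y => y ^ m * htil y) with hHidef
    have hHiint : Integrable Hi := by
      rw [hHidef, integrable_indicator_iff measurableSet_Ioc]; exact hHint
    have hHieq : ∫ y, Hi y = M := by rw [hHidef, integral_indicator measurableSet_Ioc]
    have hGle : ∀ y, G y ≤ Real.exp (c * bInfty) * Hi y := by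
      intro y
      by_cases hy : y ∈ Set.Ioc (0:ℝ) bInfty
      · rw [hGdef, hHidef, Set.indicator_of_mem hy, Set.indicator_of_mem hy]
        have h1 : Real.exp (c * y) ≤ Real.exp (c * bInfty) :=
          Real.exp_le_exp.mpr (mul_le_mul_of_nonneg_left hy.2 hc0)
        rw [show y ^ m * Real.exp (c * y) * htil y
            = Real.exp (c * y) * (y ^ m * htil y) by ring]
        exact mul_le_mul_of_nonneg_right h1 (hymnn y hy)
      · rw [hGdef, hHidef, Set.indicator_of_notMem hy, Set.indicator_of_notMem hy, mul_zero]
    -- F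
    set F : ℝ → ℝ := fun x => ∫ y in (0:ℝ)..x, G y with hFdef
    have hFcont : Continuous F := by
      rw [hFdef]; exact intervalIntegral.continuous_primitive (fun a b => hGint.intervalIntegrable) 0
    have hFIoc : ∀ x, 0 ≤ x → F x = ∫ y in Set.Ioc 0 x, G y := by
      intro x hx; rw [hFdef]; exact intervalIntegral.integral_of_le hx
    have hFnn : ∀ x, 0 ≤ x → 0 ≤ F x := by
      intro x hx
      rw [hFIoc x hx]
      exact setIntegral_nonneg measurableSet_Ioc (fun y _ => hGnn y)
    have hFle : ∀ x, 0 ≤ x → F x ≤ Real.exp (c * bInfty) * M := by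
      intro x hx
      rw [hFIoc x hx]
      calc ∫ y in Set.Ioc 0 x, G y ≤ ∫ y, G y :=
            setIntegral_le_integral hGint (Filter.Eventually.of_forall hGnn)
      _ ≤ ∫ y, Real.exp (c * bInfty) * Hi y :=
            integral_mono hGint (hHiint.const_mul _) hGle
      _ = Real.exp (c * bInfty) * M := by rw [MeasureTheory.integral_const_mul, hHieq]
    -- rewrite Ib
    have hIb : ∀ (bb : ℝ → ℝ), (∀ s ≤ (0:ℝ), bb s ∈ Set.Icc 0 bInfty) →
        ∀ (J : Set ℝ), MeasurableSet J → J ⊆ Set.Iic 0 →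
        Ib r htil bb J n m c = ∫ s in J, (1 - s) ^ n * Real.exp (lam * s) * F (bb s) := by
      intro bb hbbmem J hJmeas hJsub
      unfold Ib
      refine setIntegral_congr_fun hJmeas (fun s hs => ?_)
      have hs0 : s ≤ (0:ℝ) := hJsub hs
      have hbb := hbbmem s hs0
      rw [hFIoc _ hbb.1, ← MeasureTheory.integral_const_mul]
      refine setIntegral_congr_fun measurableSet_Ioc (fun y hy => ?_)
      have hy' : y ∈ Set.Ioc (0:ℝ) bInfty := ⟨hy.1, hy.2.trans hbb.2⟩
      rw [hGdef, Set.indicator_of_mem hy']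
      rw [show c * y + c ^ 2 * s / 2 - r * s = lam * s + c * y by rw [hlamdef]; ring,
        Real.exp_add]
      ring
    -- integrability of the outer integrand
    have hK : ∀ (bb : ℝ → ℝ), ContinuousOn bb (Set.Iic 0) →
        (∀ s ≤ (0:ℝ), bb s ∈ Set.Icc 0 bInfty) →
        IntegrableOn (fun s => (1 - s) ^ n * Real.exp (lam * s) * F (bb s)) (Set.Iic t) := by
      intro bb hbbcont hbbmem
      refine Integrable.mono'
        ((polyexp_int ht hlam2).const_mul (Real.exp (c * bInfty) * M)) ?_ ?_
      · refine ContinuousOn.aestronglyMeasurable (ContinuousOn.mul ?_ ?_) measurableSet_Iic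
        · exact (((continuous_const.sub continuous_id).pow n).mul
            (Real.continuous_exp.comp (continuous_const.mul continuous_id))).continuousOn
        · exact hFcont.comp_continuousOn (hbbcont.mono (fun s hs => le_trans hs ht))
      · filter_upwards [ae_restrict_mem measurableSet_Iic] with s hs
        have hs0 : s ≤ (0:ℝ) := le_trans hs ht
        have h1s : (0:ℝ) ≤ (1 - s) ^ n := pow_nonneg (by linarith) n
        have hke : (0:ℝ) ≤ (1 - s) ^ n * Real.exp (lam * s) :=
          mul_nonneg h1s (Real.exp_pos _).le
        rw [Real.norm_eq_abs, abs_of_nonneg (mul_nonneg hke (hFnn _ (hbbmem s hs0).1))]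
        calc (1 - s) ^ n * Real.exp (lam * s) * F (bb s)
            ≤ (1 - s) ^ n * Real.exp (lam * s) * (Real.exp (c * bInfty) * M) :=
              mul_le_mul_of_nonneg_left (hFle _ (hbbmem s hs0).1) hke
        _ = Real.exp (c * bInfty) * M * ((1 - s) ^ n * Real.exp (lam * s)) := by ring
    have hKb := hK b hbcont hbmem
    have hKb' := hK b' hbcont' hbmem'
    have hsubT : Set.Iic (t - ε) ⊆ Set.Iic t := Set.Iic_subset_Iic.mpr (by linarith)
    have hsubIoc : Set.Ioc (t - ε) t ⊆ Set.Iic t := Set.Ioc_subset_Iic_self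
    have hKdeq : ∀ s : ℝ, (1 - s) ^ n * Real.exp (lam * s) * F (b s)
        - (1 - s) ^ n * Real.exp (lam * s) * F (b' s)
        = (1 - s) ^ n * Real.exp (lam * s) * (F (b s) - F (b' s)) := fun s => by ring
    have hKdint : IntegrableOn
        (fun s => (1 - s) ^ n * Real.exp (lam * s) * (F (b s) - F (b' s))) (Set.Iic t) :=
      (hKb.sub hKb').congr (Filter.Eventually.of_forall (fun s => hKdeq s))
    -- the three identities
    have htail_eq : Ib r htil b (Set.Iic (t - ε)) n m c - Ib r htil b' (Set.Iic (t - ε)) n m c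
        = ∫ s in Set.Iic (t - ε),
            (1 - s) ^ n * Real.exp (lam * s) * (F (b s) - F (b' s)) := by
      rw [hIb b hbmem _ measurableSet_Iic (Set.Iic_subset_Iic.mpr (by linarith)),
        hIb b' hbmem' _ measurableSet_Iic (Set.Iic_subset_Iic.mpr (by linarith)),
        ← integral_sub (hKb.mono_set hsubT) (hKb'.mono_set hsubT)]
      exact setIntegral_congr_fun measurableSet_Iic (fun s _ => hKdeq s)
    have hden_eq : Ib r htil b (Set.Icc (t - ε) t) n m c
        - Ib r htil b' (Set.Icc (t - ε) t) n m c
        = ∫ s in Set.Ioc (t - ε) t,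
            (1 - s) ^ n * Real.exp (lam * s) * (F (b s) - F (b' s)) := by
      rw [hIb b hbmem _ measurableSet_Icc (fun s hs => le_trans hs.2 ht),
        hIb b' hbmem' _ measurableSet_Icc (fun s hs => le_trans hs.2 ht),
        integral_Icc_eq_integral_Ioc, integral_Icc_eq_integral_Ioc,
        ← integral_sub (hKb.mono_set hsubIoc) (hKb'.mono_set hsubIoc)]
      exact setIntegral_congr_fun measurableSet_Ioc (fun s _ => hKdeq s)
    have hnum_eq : Ib r htil b (Set.Iic t) n m c - Ib r htil b' (Set.Iic t) n m c
        = (Ib r htil b (Set.Iic (t - ε)) n m c - Ib r htil b' (Set.Iic (t - ε)) n m c)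
          + (Ib r htil b (Set.Icc (t - ε) t) n m c
            - Ib r htil b' (Set.Icc (t - ε) t) n m c) := by
      rw [htail_eq, hden_eq,
        hIb b hbmem _ measurableSet_Iic (Set.Iic_subset_Iic.mpr ht),
        hIb b' hbmem' _ measurableSet_Iic (Set.Iic_subset_Iic.mpr ht),
        ← integral_sub hKb hKb']
      rw [show (fun s => (1 - s) ^ n * Real.exp (lam * s) * F (b s)
            - (1 - s) ^ n * Real.exp (lam * s) * F (b' s))
          = fun s => (1 - s) ^ n * Real.exp (lam * s) * (F (b s) - F (b' s)) by
        funext s; exact hKdeq s]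
      rw [← setIntegral_union (Set.Iic_disjoint_Ioc le_rfl) measurableSet_Ioc
        (hKdint.mono_set hsubT) (hKdint.mono_set hsubIoc),
        Set.Iic_union_Ioc_eq_Iic (by linarith : t - ε ≤ t)]
    -- pointwise bound on the difference integrand
    have hKdbd : ∀ s, s ≤ (0:ℝ) →
        |(1 - s) ^ n * Real.exp (lam * s) * (F (b s) - F (b' s))|
          ≤ Real.exp (c * bInfty) * M * ((1 - s) ^ n * Real.exp (lam * s)) := by
      intro s hs0
      have h1s : (0:ℝ) ≤ (1 - s) ^ n := pow_nonneg (by linarith) n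
      have hke : (0:ℝ) ≤ (1 - s) ^ n * Real.exp (lam * s) :=
        mul_nonneg h1s (Real.exp_pos _).le
      have hFb := hFle (b s) (hbmem s hs0).1
      have hFb' := hFle (b' s) (hbmem' s hs0).1
      have hFbnn := hFnn (b s) (hbmem s hs0).1
      have hFb'nn := hFnn (b' s) (hbmem' s hs0).1
      have habs : |F (b s) - F (b' s)| ≤ Real.exp (c * bInfty) * M :=
        abs_le.mpr ⟨by linarith, by linarith⟩
      rw [abs_mul, abs_of_nonneg hke]
      calc (1 - s) ^ n * Real.exp (lam * s) * |F (b s) - F (b' s)|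
          ≤ (1 - s) ^ n * Real.exp (lam * s) * (Real.exp (c * bInfty) * M) :=
            mul_le_mul_of_nonneg_left habs hke
      _ = Real.exp (c * bInfty) * M * ((1 - s) ^ n * Real.exp (lam * s)) := by ring
    -- tail bound
    have hMK0 : (0:ℝ) ≤ M * (1 - (t - ε)) ^ n :=
      mul_nonneg hM0 (pow_nonneg (by linarith) n)
    have htail_bd : |∫ s in Set.Iic (t - ε),
        (1 - s) ^ n * Real.exp (lam * s) * (F (b s) - F (b' s))|
        ≤ 2 * (M * (1 - (t - ε)) ^ n) * Real.exp (c * bInfty + lam * (t - ε)) := by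
      have hTε : t - ε ≤ (0:ℝ) := by linarith
      have hint1 : IntegrableOn
          (fun s => (1 - s) ^ n * Real.exp (lam * s) * (F (b s) - F (b' s)))
          (Set.Iic (t - ε)) := hKdint.mono_set hsubT
      have h1 : |∫ s in Set.Iic (t - ε),
          (1 - s) ^ n * Real.exp (lam * s) * (F (b s) - F (b' s))|
          ≤ ∫ s in Set.Iic (t - ε),
            |(1 - s) ^ n * Real.exp (lam * s) * (F (b s) - F (b' s))| := by
        have hni := norm_integral_le_integral_norm
          (μ := volume.restrict (Set.Iic (t - ε)))
          (fun s => (1 - s) ^ n * Real.exp (lam * s) * (F (b s) - F (b' s)))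
        simp only [Real.norm_eq_abs] at hni
        exact hni
      have h2 : ∫ s in Set.Iic (t - ε),
          |(1 - s) ^ n * Real.exp (lam * s) * (F (b s) - F (b' s))|
          ≤ ∫ s in Set.Iic (t - ε),
            Real.exp (c * bInfty) * M * ((1 - s) ^ n * Real.exp (lam * s)) :=
        setIntegral_mono_on hint1.abs
          ((polyexp_int hTε hlam2).const_mul _) measurableSet_Iic
          (fun s hs => hKdbd s (le_trans hs hTε))
      have h3 : ∫ s in Set.Iic (t - ε),
          Real.exp (c * bInfty) * M * ((1 - s) ^ n * Real.exp (lam * s))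
          = Real.exp (c * bInfty) * M
            * ∫ s in Set.Iic (t - ε), (1 - s) ^ n * Real.exp (lam * s) :=
        MeasureTheory.integral_const_mul _ _
      have h4 := polyexp_intval hTε hlam2
      have h5 : 2 / lam ≤ 2 := by
        rw [div_le_iff₀ hlam0]; linarith
      have h6 : Real.exp (c * bInfty) * M
            * ∫ s in Set.Iic (t - ε), (1 - s) ^ n * Real.exp (lam * s)
          ≤ Real.exp (c * bInfty) * M
            * ((1 - (t - ε)) ^ n * Real.exp (lam * (t - ε)) * (2 / lam)) :=
        mul_le_mul_of_nonneg_left h4 (mul_nonneg (Real.exp_pos _).le hM0)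
      calc |∫ s in Set.Iic (t - ε),
          (1 - s) ^ n * Real.exp (lam * s) * (F (b s) - F (b' s))|
          ≤ Real.exp (c * bInfty) * M
            * ((1 - (t - ε)) ^ n * Real.exp (lam * (t - ε)) * (2 / lam)) := by
            rw [← h3] at h6; linarith
      _ = (Real.exp (c * bInfty) * M * ((1 - (t - ε)) ^ n * Real.exp (lam * (t - ε))))
            * (2 / lam) := by ring
      _ ≤ (Real.exp (c * bInfty) * M * ((1 - (t - ε)) ^ n * Real.exp (lam * (t - ε)))) * 2 := by
            refine mul_le_mul_of_nonneg_left h5 ?_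
            exact mul_nonneg (mul_nonneg (Real.exp_pos _).le hM0)
              (mul_nonneg (pow_nonneg (by linarith) n) (Real.exp_pos _).le)
      _ = 2 * (M * (1 - (t - ε)) ^ n) * Real.exp (c * bInfty + lam * (t - ε)) := by
            rw [Real.exp_add]; ring
    -- lower bound for the denominator
    have hFdiff_lb : ∀ s, t - δ ≤ s → s ≤ t →
        Real.exp (β * c) * A ≤ F (b s) - F (b' s) := by
      intro s h1 h2
      have hs0 : s ≤ (0:ℝ) := le_trans h2 ht
      have hbts : b t ≤ b s := hbanti (Set.mem_Iic.mpr hs0) (Set.mem_Iic.mpr ht) h2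
      have hb's : b' s < β := hb'β s h1 h2
      have hb'nn : 0 ≤ b' s := (hbmem' s hs0).1
      have hb'le : b' s ≤ b s := by linarith
      have hdiff : F (b s) - F (b' s) = ∫ y in Set.Ioc (b' s) (b s), G y := by
        simp only [hFdef]
        rw [intervalIntegral.integral_interval_sub_left hGint.intervalIntegrable
          hGint.intervalIntegrable]
        exact intervalIntegral.integral_of_le hb'le
      rw [hdiff]
      have hstep1 : Real.exp (β * c) * A ≤ ∫ y in Set.Ioc β (b t), G y := by
        have hmono := setIntegral_mono_on (hAint.const_mul (Real.exp (β * c)))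
          hGint.integrableOn measurableSet_Ioc (fun y hy => ?_)
        · calc Real.exp (β * c) * A
              = ∫ y in Set.Ioc β (b t), Real.exp (β * c) * (y ^ m * htil y) :=
                (MeasureTheory.integral_const_mul _ _).symm
          _ ≤ ∫ y in Set.Ioc β (b t), G y := hmono
        · have hy' : y ∈ Set.Ioc (0:ℝ) bInfty := hsubβ hy
          rw [hGdef, Set.indicator_of_mem hy']
          have hexp : Real.exp (β * c) ≤ Real.exp (c * y) := by
            apply Real.exp_le_exp.mpr
            nlinarith [hy.1.le]
          calc Real.exp (β * c) * (y ^ m * htil y)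
              ≤ Real.exp (c * y) * (y ^ m * htil y) :=
                mul_le_mul_of_nonneg_right hexp (hymnn y hy')
          _ = y ^ m * Real.exp (c * y) * htil y := by ring
      have hstep2 : ∫ y in Set.Ioc β (b t), G y ≤ ∫ y in Set.Ioc (b' s) (b s), G y :=
        setIntegral_mono_set hGint.integrableOn
          (Filter.Eventually.of_forall hGnn)
          ((Set.Ioc_subset_Ioc hb's.le hbts).eventuallyLE)
      linarith
    have hKdnn : ∀ s, t - δ ≤ s → s ≤ t →
        0 ≤ (1 - s) ^ n * Real.exp (lam * s) * (F (b s) - F (b' s)) := by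
      intro s h1 h2
      have h3 := hFdiff_lb s h1 h2
      have h4 : 0 ≤ F (b s) - F (b' s) :=
        le_trans (mul_nonneg (Real.exp_pos _).le hApos.le) h3
      exact mul_nonneg (mul_nonneg (pow_nonneg (by linarith [le_trans h2 ht]) n)
        (Real.exp_pos _).le) h4
    have hden_lb : P / 2 * Real.exp (β * c + lam * (t - δ / 2))
        ≤ ∫ s in Set.Ioc (t - ε) t,
            (1 - s) ^ n * Real.exp (lam * s) * (F (b s) - F (b' s)) := by
      have hsub1 : Set.Ioc (t - ε) (t - δ) ⊆ Set.Iic t :=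
        fun s hs => Set.mem_Iic.mpr (le_trans hs.2 (by linarith))
      have hsub2 : Set.Ioc (t - δ) (t - δ / 2) ⊆ Set.Iic t :=
        fun s hs => Set.mem_Iic.mpr (le_trans hs.2 (by linarith))
      have hsub3 : Set.Ioc (t - δ / 2) t ⊆ Set.Iic t := Set.Ioc_subset_Iic_self
      rw [show Set.Ioc (t - ε) t = Set.Ioc (t - ε) (t - δ) ∪ Set.Ioc (t - δ) t from
          (Set.Ioc_union_Ioc_eq_Ioc (by linarith) (by linarith)).symm,
        setIntegral_union (Set.Ioc_disjoint_Ioc_of_le le_rfl) measurableSet_Ioc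
          (hKdint.mono_set hsub1) (hKdint.mono_set (fun s hs => Set.mem_Iic.mpr hs.2)),
        show Set.Ioc (t - δ) t = Set.Ioc (t - δ) (t - δ / 2) ∪ Set.Ioc (t - δ / 2) t from
          (Set.Ioc_union_Ioc_eq_Ioc (by linarith) (by linarith)).symm,
        setIntegral_union (Set.Ioc_disjoint_Ioc_of_le le_rfl) measurableSet_Ioc
          (hKdint.mono_set hsub2) (hKdint.mono_set hsub3)]
      have hI1 : -(Q * Real.exp (c * bInfty + lam * (t - δ)))
          ≤ ∫ s in Set.Ioc (t - ε) (t - δ),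
              (1 - s) ^ n * Real.exp (lam * s) * (F (b s) - F (b' s)) := by
        have hintI1 : IntegrableOn
            (fun s => (1 - s) ^ n * Real.exp (lam * s) * (F (b s) - F (b' s)))
            (Set.Ioc (t - ε) (t - δ)) := hKdint.mono_set hsub1
        have hconst : ∀ s ∈ Set.Ioc (t - ε) (t - δ),
            |(1 - s) ^ n * Real.exp (lam * s) * (F (b s) - F (b' s))|
              ≤ Real.exp (c * bInfty) * M
                * ((1 - (t - ε)) ^ n * Real.exp (lam * (t - δ))) := by
          intro s hs
          have hs0 : s ≤ (0:ℝ) := le_trans hs.2 (by linarith)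
          refine le_trans (hKdbd s hs0) ?_
          have h1s : (1 - s) ^ n ≤ (1 - (t - ε)) ^ n :=
            pow_le_pow_left₀ (by linarith) (by linarith [hs.1]) n
          have h2s : Real.exp (lam * s) ≤ Real.exp (lam * (t - δ)) :=
            Real.exp_le_exp.mpr (mul_le_mul_of_nonneg_left hs.2 hlam0.le)
          have := mul_le_mul h1s h2s (Real.exp_pos _).le (pow_nonneg (by linarith) n)
          exact mul_le_mul_of_nonneg_left this (mul_nonneg (Real.exp_pos _).le hM0)
        have habs : |∫ s in Set.Ioc (t - ε) (t - δ),
            (1 - s) ^ n * Real.exp (lam * s) * (F (b s) - F (b' s))|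
            ≤ Real.exp (c * bInfty) * M
              * ((1 - (t - ε)) ^ n * Real.exp (lam * (t - δ))) * (ε - δ) := by
          have ha1 : |∫ s in Set.Ioc (t - ε) (t - δ),
              (1 - s) ^ n * Real.exp (lam * s) * (F (b s) - F (b' s))|
              ≤ ∫ s in Set.Ioc (t - ε) (t - δ),
                |(1 - s) ^ n * Real.exp (lam * s) * (F (b s) - F (b' s))| := by
            have hni := norm_integral_le_integral_norm
              (μ := volume.restrict (Set.Ioc (t - ε) (t - δ)))
              (fun s => (1 - s) ^ n * Real.exp (lam * s) * (F (b s) - F (b' s)))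
            simp only [Real.norm_eq_abs] at hni
            exact hni
          have ha2 : ∫ s in Set.Ioc (t - ε) (t - δ),
              |(1 - s) ^ n * Real.exp (lam * s) * (F (b s) - F (b' s))|
              ≤ ∫ _s in Set.Ioc (t - ε) (t - δ),
                Real.exp (c * bInfty) * M
                  * ((1 - (t - ε)) ^ n * Real.exp (lam * (t - δ))) :=
            setIntegral_mono_on hintI1.abs
              (integrableOn_const measure_Ioc_lt_top.ne)
              measurableSet_Ioc hconst
          have ha3 : ∫ _s in Set.Ioc (t - ε) (t - δ),
              Real.exp (c * bInfty) * M * ((1 - (t - ε)) ^ n * Real.exp (lam * (t - δ)))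
              = Real.exp (c * bInfty) * M
                * ((1 - (t - ε)) ^ n * Real.exp (lam * (t - δ))) * (ε - δ) := by
            rw [setIntegral_const, Real.volume_real_Ioc_of_le (by linarith), smul_eq_mul]
            ring
          rw [ha3] at ha2
          linarith
        have hQbd : Real.exp (c * bInfty) * M
            * ((1 - (t - ε)) ^ n * Real.exp (lam * (t - δ))) * (ε - δ)
            ≤ Q * Real.exp (c * bInfty + lam * (t - δ)) := by
          rw [hQdef, Real.exp_add]
          have hfac : (0:ℝ) ≤ Real.exp (c * bInfty) * M
              * ((1 - (t - ε)) ^ n * Real.exp (lam * (t - δ))) :=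
            mul_nonneg (mul_nonneg (Real.exp_pos _).le hM0)
              (mul_nonneg (pow_nonneg (by linarith) n) (Real.exp_pos _).le)
          calc Real.exp (c * bInfty) * M
              * ((1 - (t - ε)) ^ n * Real.exp (lam * (t - δ))) * (ε - δ)
              ≤ Real.exp (c * bInfty) * M
                * ((1 - (t - ε)) ^ n * Real.exp (lam * (t - δ))) * ε :=
                mul_le_mul_of_nonneg_left (by linarith) hfac
          _ = M * (1 - (t - ε)) ^ n * ε
                * (Real.exp (c * bInfty) * Real.exp (lam * (t - δ))) := by ring
        have := neg_abs_le (∫ s in Set.Ioc (t - ε) (t - δ),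
          (1 - s) ^ n * Real.exp (lam * s) * (F (b s) - F (b' s)))
        linarith
      have hI2 : 0 ≤ ∫ s in Set.Ioc (t - δ) (t - δ / 2),
          (1 - s) ^ n * Real.exp (lam * s) * (F (b s) - F (b' s)) :=
        setIntegral_nonneg measurableSet_Ioc
          (fun s hs => hKdnn s hs.1.le (le_trans hs.2 (by linarith)))
      have hI3 : Real.exp (β * c) * A * Real.exp (lam * (t - δ / 2)) * (δ / 2)
          ≤ ∫ s in Set.Ioc (t - δ / 2) t,
              (1 - s) ^ n * Real.exp (lam * s) * (F (b s) - F (b' s)) := by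
        have hconst : ∀ s ∈ Set.Ioc (t - δ / 2) t,
            Real.exp (β * c) * A * Real.exp (lam * (t - δ / 2))
              ≤ (1 - s) ^ n * Real.exp (lam * s) * (F (b s) - F (b' s)) := by
          intro s hs
          have hs1 : t - δ ≤ s := le_trans (by linarith) hs.1.le
          have hs0 : s ≤ (0:ℝ) := le_trans hs.2 ht
          have k1 : Real.exp (lam * (t - δ / 2)) ≤ Real.exp (lam * s) :=
            Real.exp_le_exp.mpr (mul_le_mul_of_nonneg_left hs.1.le hlam0.le)
          have k2 : Real.exp (β * c) * A ≤ F (b s) - F (b' s) := hFdiff_lb s hs1 hs.2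
          have k3 : (1:ℝ) ≤ (1 - s) ^ n := by simpa using pow_le_pow_left₀ (by norm_num : (0:ℝ) ≤ 1) (by linarith : (1:ℝ) ≤ 1 - s) n
          have kA : (0:ℝ) ≤ Real.exp (β * c) * A :=
            mul_nonneg (Real.exp_pos _).le hApos.le
          calc Real.exp (β * c) * A * Real.exp (lam * (t - δ / 2))
              ≤ Real.exp (β * c) * A * Real.exp (lam * s) :=
                mul_le_mul_of_nonneg_left k1 kA
          _ ≤ (F (b s) - F (b' s)) * Real.exp (lam * s) :=
                mul_le_mul_of_nonneg_right k2 (Real.exp_pos _).le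
          _ = 1 * Real.exp (lam * s) * (F (b s) - F (b' s)) := by ring
          _ ≤ (1 - s) ^ n * Real.exp (lam * s) * (F (b s) - F (b' s)) := by
                refine mul_le_mul_of_nonneg_right
                  (mul_le_mul_of_nonneg_right k3 (Real.exp_pos _).le) ?_
                linarith [hFdiff_lb s hs1 hs.2, kA]
        have := setIntegral_ge_of_const_le (μ := volume) measurableSet_Ioc
          measure_Ioc_lt_top.ne hconst (hKdint.mono_set hsub3)
        rw [Real.volume_real_Ioc_of_le (by linarith), smul_eq_mul, mul_comm] at this
        calc Real.exp (β * c) * A * Real.exp (lam * (t - δ / 2)) * (δ / 2)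
            = Real.exp (β * c) * A * Real.exp (lam * (t - δ / 2)) * (t - (t - δ / 2)) := by
              ring_nf
        _ ≤ _ := this
      have hx : Real.exp ((bInfty - β) * c - lam * (δ / 2))
            * Real.exp (β * c + lam * (t - δ / 2))
          = Real.exp (c * bInfty + lam * (t - δ)) := by
        rw [← Real.exp_add]; congr 1; ring
      have hPE : Real.exp (β * c) * A * Real.exp (lam * (t - δ / 2)) * (δ / 2)
          = P * Real.exp (β * c + lam * (t - δ / 2)) := by
        rw [hPdef, Real.exp_add]; ring
      have hEpos : (0:ℝ) < Real.exp (β * c + lam * (t - δ / 2)) := Real.exp_pos _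
      have h9 : Q * Real.exp ((bInfty - β) * c - lam * (δ / 2))
            * Real.exp (β * c + lam * (t - δ / 2))
          ≤ P / 2 * Real.exp (β * c + lam * (t - δ / 2)) :=
        mul_le_mul_of_nonneg_right hev3.le hEpos.le
      have hI1' : -(Q * Real.exp ((bInfty - β) * c - lam * (δ / 2))
            * Real.exp (β * c + lam * (t - δ / 2)))
          ≤ ∫ s in Set.Ioc (t - ε) (t - δ),
              (1 - s) ^ n * Real.exp (lam * s) * (F (b s) - F (b' s)) := by
        rw [mul_assoc Q, hx]; exact hI1
      rw [hPE] at hI3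
      linarith
    -- conclude
    have hden_pos : 0 < Ib r htil b (Set.Icc (t - ε) t) n m c
        - Ib r htil b' (Set.Icc (t - ε) t) n m c := by
      rw [hden_eq]
      refine lt_of_lt_of_le ?_ hden_lb
      positivity
    constructor
    · rw [hnum_eq, add_div, div_self (ne_of_gt hden_pos)]
    · rw [abs_div, abs_of_pos hden_pos]
      have h1 := htail_bd
      have h2 : P / 2 * Real.exp (β * c + lam * (t - δ / 2))
          ≤ Ib r htil b (Set.Icc (t - ε) t) n m c
            - Ib r htil b' (Set.Icc (t - ε) t) n m c := by
        rw [hden_eq]; exact hden_lb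
      have h3 : |Ib r htil b (Set.Iic (t - ε)) n m c - Ib r htil b' (Set.Iic (t - ε)) n m c|
          ≤ 2 * (M * (1 - (t - ε)) ^ n) * Real.exp (c * bInfty + lam * (t - ε)) := by
        rw [htail_eq]; exact h1
      calc |Ib r htil b (Set.Iic (t - ε)) n m c - Ib r htil b' (Set.Iic (t - ε)) n m c|
            / (Ib r htil b (Set.Icc (t - ε) t) n m c
              - Ib r htil b' (Set.Icc (t - ε) t) n m c)
          ≤ (2 * (M * (1 - (t - ε)) ^ n) * Real.exp (c * bInfty + lam * (t - ε)))
            / (P / 2 * Real.exp (β * c + lam * (t - δ / 2))) := by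
            refine div_le_div₀ (by positivity) h3 (by positivity) h2
      _ = R c := by
          simp only [hRdef]
          rw [← hlamdef]
          rw [show (bInfty - β) * c - lam * (ε - δ / 2)
              = (c * bInfty + lam * (t - ε)) - (β * c + lam * (t - δ / 2)) by ring,
            Real.exp_sub]
          field_simp
          ring
  -- assemble
  have h0 : Filter.Tendsto
      (fun c => (Ib r htil b (Set.Iic (t - ε)) n m c - Ib r htil b' (Set.Iic (t - ε)) n m c) /
        (Ib r htil b (Set.Icc (t - ε) t) n m c - Ib r htil b' (Set.Icc (t - ε) t) n m c))
      Filter.atTop (nhds 0) := by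
    refine squeeze_zero_norm' ?_ hR0
    exact main.mono (fun c hc => by rw [Real.norm_eq_abs]; exact hc.2)
  have h1 := h0.add (tendsto_const_nhds (x := (1:ℝ)))
  rw [zero_add] at h1
  exact Filter.Tendsto.congr' (main.mono fun c hc => hc.1.symm) h1


theorem stmt16 (r bInfty : ℝ) (hr : 0 < r) (hb : 0 < bInfty)
    (htil : ℝ → ℝ) (hcont : ContinuousOn htil (Set.Icc 0 bInfty))
    (hnonneg : ∀ y ∈ Set.Icc 0 bInfty, 0 ≤ htil y)
    (hnull : volume {y | y ∈ Set.Icc (0 : ℝ) bInfty ∧ htil y = 0} = 0)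
    (b : ℝ → ℝ) (hbcont : ContinuousOn b (Set.Iic 0))
    (hbanti : AntitoneOn b (Set.Iic 0))
    (hbmem : ∀ s ≤ (0 : ℝ), b s ∈ Set.Icc 0 bInfty)
    (hbpos : ∀ s < (0 : ℝ), 0 < b s)
    (b' : ℝ → ℝ) (hbcont' : ContinuousOn b' (Set.Iic 0))
    (hbanti' : AntitoneOn b' (Set.Iic 0))
    (hbmem' : ∀ s ≤ (0 : ℝ), b' s ∈ Set.Icc 0 bInfty)
    (hbpos' : ∀ s < (0 : ℝ), 0 < b' s)
    (t : ℝ) (ht : t ≤ 0) (hne : b t ≠ b' t)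
    (ε : ℝ) (hε : 0 < ε) (n m : ℕ) :
    Filter.Tendsto
      (fun c => (Ib r htil b (Set.Iic t) n m c - Ib r htil b' (Set.Iic t) n m c) /
        (Ib r htil b (Set.Icc (t - ε) t) n m c - Ib r htil b' (Set.Icc (t - ε) t) n m c))
      Filter.atTop (nhds 1) := by
  rcases hne.lt_or_gt with h | h
  · have hk := key r bInfty hb htil hcont hnonneg hnull b' hbcont' hbanti' hbmem'
      b hbcont hbmem t ht h ε hε n m
    refine hk.congr (fun c => ?_)
    rw [← neg_sub (Ib r htil b' (Set.Iic t) n m c),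
      ← neg_sub (Ib r htil b' (Set.Icc (t - ε) t) n m c), neg_div_neg_eq]
  · exact key r bInfty hb htil hcont hnonneg hnull b hbcont hbanti hbmem
      b' hbcont' hbmem' t ht h ε hε n m
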